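/- For any finite simple graph G with n vertices and e edges, the maximum independent set satisfies α(G) ≥ n² / (2e + n) (Turán's theorem, independent set form). -/

import Mathlib

open Finset

variable {V : Type} [Fintype V] [DecidableEq V]

/-- Fractional vertex cover LP value. -/
noncomputable def FVC (G : SimpleGraph V) : ℝ :=
  sInf {s : ℝ | ∃ x : V → ℝ, (∀ v, 0 ≤ x v ∧ x v ≤ 1) ∧
    (∀ u v, G.Adj u v → 1 ≤ x u + x v) ∧ s = ∑ v, x v}

/-- Fractional matching LP value. -/
noncomputable def FMM (G : SimpleGraph V) [DecidableRel G.Adj] : ℝ :=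
  sSup {s : ℝ | ∃ y : Sym2 V → ℝ, (∀ e, 0 ≤ y e ∧ y e ≤ 1) ∧
    (∀ v : V, ∑ e ∈ G.edgeFinset, (if v ∈ e then y e else 0) ≤ 1) ∧
    s = ∑ e ∈ G.edgeFinset, y e}

/-- Fractional clique packing LP value. -/
noncomputable def FCP (G : SimpleGraph V) : ℝ :=
  sSup {s : ℝ | ∃ x : Finset V → ℝ, (∀ C, 0 ≤ x C ∧ x C ≤ 1) ∧
    (∀ C : Finset V, ¬ G.IsClique (C : Set V) → x C = 0) ∧
    (∀ v : V, ∑ C : Finset V, (if v ∈ C then x C else 0) ≤ 1) ∧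
    s = ∑ C : Finset V, x C * ((C.card : ℝ) - 1)}

/-- Fractional clique cover LP value. -/
noncomputable def FCC (G : SimpleGraph V) : ℝ :=
  sInf {s : ℝ | ∃ y : Finset V → ℝ, (∀ C, 0 ≤ y C ∧ y C ≤ 1) ∧
    (∀ C : Finset V, ¬ G.IsClique (C : Set V) → y C = 0) ∧
    (∀ v : V, 1 ≤ ∑ C : Finset V, (if v ∈ C then y C else 0)) ∧
    s = ∑ C : Finset V, y C}

/-- Maximum independent set size. -/
noncomputable def alphaNum (G : SimpleGraph V) : ℕ :=
  sSup {k : ℕ | ∃ S : Finset V,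
    ((S : Set V).Pairwise fun u v => ¬ G.Adj u v) ∧ S.card = k}

/-- Clique number. -/
noncomputable def cliqueNum (G : SimpleGraph V) : ℕ :=
  sSup {k : ℕ | ∃ C : Finset V, G.IsNClique k C}

/-- Edge-and-small-clique constrained fractional independent set LP value `α_{Fk}`. -/
noncomputable def alphaF (G : SimpleGraph V) (k : ℕ) : ℝ :=
  sSup {s : ℝ | ∃ x : V → ℝ, (∀ v, 0 ≤ x v ∧ x v ≤ 1) ∧
    (∀ C : Finset V, G.IsClique (C : Set V) → C.card ≤ k → ∑ v ∈ C, x v ≤ 1) ∧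
    s = ∑ v, x v}

/-- Minimum vertex cover size. -/
noncomputable def VC (G : SimpleGraph V) : ℕ :=
  sInf {k : ℕ | ∃ S : Finset V,
    (∀ u v, G.Adj u v → u ∈ S ∨ v ∈ S) ∧ S.card = k}

/-- Storage capacity. -/
noncomputable def Cap (G : SimpleGraph V) : ℝ :=
  sSup {x : ℝ | ∃ q : ℕ, 2 ≤ q ∧ ∃ C : Finset (V → Fin q),
    (∀ v : V, ∃ f : ({u : V // G.Adj v u} → Fin q) → Fin q,
      ∀ c ∈ C, f (fun u => c u.1) = c v) ∧
    x = Real.logb q C.card}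

/-- Index coding broadcast rate over alphabet of size `q`. -/
noncomputable def IndQ (G : SimpleGraph V) (q : ℕ) : ℕ :=
  sInf {l : ℕ | ∃ f : (V → Fin q) → (Fin l → Fin q), ∀ v : V,
    ∃ g : (Fin l → Fin q) → ({u : V // G.Adj v u} → Fin q) → Fin q,
      ∀ p : V → Fin q, g (f p) (fun u => p u.1) = p v}

/-- Index coding broadcast rate. -/
noncomputable def Ind (G : SimpleGraph V) : ℝ :=
  sInf {x : ℝ | ∃ q : ℕ, 2 ≤ q ∧ x = IndQ G q}

lemma alpha_bddAbove (G : SimpleGraph V) :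
    BddAbove {k : ℕ | ∃ S : Finset V,
      ((S : Set V).Pairwise fun u v => ¬ G.Adj u v) ∧ S.card = k} :=
  ⟨Fintype.card V, fun k hk => by obtain ⟨S, _, hc⟩ := hk; exact hc ▸ S.card_le_univ⟩

lemma indep_le_alpha (G : SimpleGraph V) (S : Finset V)
    (h : (S : Set V).Pairwise fun u v => ¬ G.Adj u v) : S.card ≤ alphaNum G :=
  le_csSup (alpha_bddAbove G) ⟨S, h, rfl⟩

lemma exists_alpha_witness (G : SimpleGraph V) :
    ∃ S : Finset V, ((S : Set V).Pairwise fun u v => ¬ G.Adj u v) ∧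
      S.card = alphaNum G := by
  have hne : 0 ∈ {k : ℕ | ∃ S : Finset V,
      ((S : Set V).Pairwise fun u v => ¬ G.Adj u v) ∧ S.card = k} := ⟨∅, by simp, rfl⟩
  exact Nat.sSup_mem ⟨0, hne⟩ (alpha_bddAbove G)

lemma caroWei : ∀ n : ℕ, ∀ (V : Type) [Fintype V] [DecidableEq V]
    (G : SimpleGraph V) [DecidableRel G.Adj], Fintype.card V = n →
    ∑ v, (1 : ℝ) / (G.degree v + 1) ≤ (alphaNum G : ℝ) := by
  intro n
  induction n using Nat.strong_induction_on with
  | _ n ih =>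
    intro V _ _ G _ hcard
    cases isEmpty_or_nonempty V with
    | inl hV =>
      simp
    | inr hV =>
      obtain ⟨v, -, hv⟩ := Finset.exists_min_image (Finset.univ : Finset V)
        (fun u => G.degree u) Finset.univ_nonempty
      set p : V → Prop := fun u => ¬ G.Adj v u ∧ u ≠ v with hp
      have : DecidablePred p := fun u => instDecidableAnd
      set W := {u : V // p u}
      let G' : SimpleGraph W := SimpleGraph.comap Subtype.val G
      have hGdec : DecidableRel G'.Adj := fun a b => ‹DecidableRel G.Adj› a.1 b.1
      have hlt : Fintype.card W < n := hcard ▸ Fintype.card_subtype_lt (x := v) (by simp [p])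
      have hCW := ih (Fintype.card W) hlt W G' rfl
      -- degree comparison
      have hdeg : ∀ u : W, G'.degree u ≤ G.degree u.1 := by
        intro u
        rw [← SimpleGraph.card_neighborSet_eq_degree, ← SimpleGraph.card_neighborSet_eq_degree]
        exact Fintype.card_le_of_injective
          (fun w => ⟨w.1.1, w.2⟩)
          (fun a b hab => Subtype.ext (Subtype.ext (congrArg Subtype.val hab : (⟨a.1.1, a.2⟩ : G.neighborSet u.1).1 = (⟨b.1.1, b.2⟩ : G.neighborSet u.1).1)))
      -- alphaNum relation
      have halpha : alphaNum G' + 1 ≤ alphaNum G := by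
        obtain ⟨S', hS', hcardS'⟩ := exists_alpha_witness G'
        have hvnot : v ∉ S'.image Subtype.val := by
          simp only [Finset.mem_image, not_exists]
          rintro u ⟨-, h⟩
          exact u.2.2 h
        have hpair : ((insert v (S'.image Subtype.val) : Finset V) : Set V).Pairwise
            fun u w => ¬ G.Adj u w := by
          intro a ha b hb hab
          simp only [Finset.coe_insert, Set.mem_insert_iff, Finset.coe_image,
            Set.mem_image, Finset.mem_coe] at ha hb
          rcases ha with rfl | ⟨a', ha', rfl⟩
          · rcases hb with rfl | ⟨b', hb', rfl⟩
            · exact absurd rfl hab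
            · exact b'.2.1
          · rcases hb with rfl | ⟨b', hb', rfl⟩
            · exact fun h => a'.2.1 h.symm
            · exact hS' ha' hb' (fun h => hab (congrArg Subtype.val h))
        have := indep_le_alpha G _ hpair
        rwa [Finset.card_insert_of_notMem hvnot,
          Finset.card_image_of_injective _ Subtype.val_injective, hcardS'] at this
      -- sum split
      set t : Finset V := insert v (G.neighborFinset v) with ht
      have hvt : v ∉ G.neighborFinset v := by simp
      have hcardt : t.card = G.degree v + 1 := by
        rw [ht, Finset.card_insert_of_notMem hvt]; rfl
      have hsum1 : ∑ u ∈ t, (1 : ℝ) / (G.degree u + 1) ≤ 1 := by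
        have hterm : ∀ u ∈ t, (1 : ℝ) / (G.degree u + 1) ≤ 1 / (G.degree v + 1) := by
          intro u hu
          apply one_div_le_one_div_of_le
          · positivity
          · have := hv u (Finset.mem_univ u)
            exact_mod_cast add_le_add_left (Nat.cast_le.mpr this) 1
        calc ∑ u ∈ t, (1 : ℝ) / (G.degree u + 1)
            ≤ ∑ _u ∈ t, (1 : ℝ) / (G.degree v + 1) := Finset.sum_le_sum hterm
          _ = (t.card : ℝ) / (G.degree v + 1) := by
              rw [Finset.sum_const]; ring
          _ = 1 := by
              rw [hcardt]; push_cast; field_simp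
      have hmemc : ∀ u : V, u ∈ tᶜ ↔ p u := by
        intro u
        simp [ht, p, Finset.mem_compl, not_or, and_comm, SimpleGraph.mem_neighborFinset]
      have hsum2 : ∑ u ∈ tᶜ, (1 : ℝ) / (G.degree u + 1)
          = ∑ u : W, (1 : ℝ) / (G.degree u.1 + 1) := by
        rw [Finset.sum_subtype tᶜ hmemc (fun u => (1 : ℝ) / (G.degree u + 1))]
      have hsum3 : ∑ u : W, (1 : ℝ) / (G.degree u.1 + 1)
          ≤ ∑ u : W, (1 : ℝ) / (G'.degree u + 1) := by
        apply Finset.sum_le_sum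
        intro u _
        apply one_div_le_one_div_of_le
        · positivity
        · exact_mod_cast add_le_add_left (Nat.cast_le.mpr (hdeg u)) 1
      calc ∑ u : V, (1 : ℝ) / (G.degree u + 1)
          = ∑ u ∈ t, (1 : ℝ) / (G.degree u + 1)
            + ∑ u ∈ tᶜ, (1 : ℝ) / (G.degree u + 1) :=
            (Finset.sum_add_sum_compl t _).symm
        _ ≤ 1 + (alphaNum G' : ℝ) := by
            rw [hsum2]
            exact add_le_add hsum1 (hsum3.trans hCW)
        _ ≤ (alphaNum G : ℝ) := by
            rw [add_comm]
            exact_mod_cast halpha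

/-- Turán-type bound: `α(G) ≥ n² / (2e + n)`. -/
theorem stmt5 (G : SimpleGraph V) [DecidableRel G.Adj] (hn : 1 ≤ Fintype.card V) :
    ((Fintype.card V : ℝ)) ^ 2 / (2 * G.edgeFinset.card + Fintype.card V)
      ≤ (alphaNum G : ℝ) := by
  have hCW := caroWei (Fintype.card V) V G rfl
  have hD : ∑ v : V, ((G.degree v : ℝ) + 1) = 2 * G.edgeFinset.card + Fintype.card V := by
    rw [Finset.sum_add_distrib, Finset.sum_const, nsmul_eq_mul, mul_one]
    have h2 : (∑ v, (G.degree v : ℝ)) = 2 * G.edgeFinset.card := by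
      rw [← Nat.cast_sum, G.sum_degrees_eq_twice_card_edges]; push_cast; ring
    rw [h2, Finset.card_univ]
  have hCS : ((Fintype.card V : ℝ)) ^ 2 ≤
      (∑ v : V, ((G.degree v : ℝ) + 1)) * ∑ v : V, (1 : ℝ) / (G.degree v + 1) := by
    have := Finset.sum_sq_le_sum_mul_sum_of_sq_eq_mul (Finset.univ : Finset V)
      (r := fun _ => (1 : ℝ)) (f := fun v => (G.degree v : ℝ) + 1)
      (g := fun v => (1 : ℝ) / ((G.degree v : ℝ) + 1))
      (fun v _ => by positivity) (fun v _ => by positivity)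
      (fun v _ => by field_simp)
    simpa using this
  have hDpos : (0 : ℝ) < 2 * G.edgeFinset.card + Fintype.card V := by
    have : (1 : ℝ) ≤ Fintype.card V := by exact_mod_cast hn
    positivity
  rw [div_le_iff₀ hDpos]
  calc ((Fintype.card V : ℝ)) ^ 2
      ≤ (∑ v : V, ((G.degree v : ℝ) + 1)) * ∑ v : V, (1 : ℝ) / (G.degree v + 1) := hCS
    _ ≤ (2 * G.edgeFinset.card + Fintype.card V) * (alphaNum G : ℝ) := by
        rw [hD]
        exact mul_le_mul_of_nonneg_left hCW hDpos.le
    _ = (alphaNum G : ℝ) * (2 * G.edgeFinset.card + Fintype.card V) := mul_comm _ _
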